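/- Let 1/√2 < r ≤ √3/2 and β ∈ (0, π). Set g = 5 − 10r² + 6r⁴ + 4(2r²−1)(r²−1)cos β − 2r²(1−r²)cos 2β (which is positive), C = 2(3r²−2)(r²−1) + 4(2r²−1)(r²−1)cos β + (2r⁴−2r²+1)cos 2β, and D = 2 sin β·(2(r²−1) + (2r²−1)cos β). Then there exists φ ∈ (0, π) satisfying sin φ = −D/g and cos φ = −C/g, and for this φ the matrix identity R_L(φ)·R_R(π−β)·R_L(π−β)·R_R(φ) = R_L(π)·R_R(π+β)·R_L(π+β)·R_R(π) holds. Consequently the path L_φ R_{π−β} L_{π−β} R_φ connects the same initial and final configurations as the path L_π R_{π+β} L_{π+β} R_π and has strictly smaller length: r(2φ + 2(π−β)) < r(2π + 2(π+β)). (This is the core of the proof that a non-trivial CCCCCC path is non-optimal for r ≤ √3/2.) -/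

import Mathlib

open Real

noncomputable def OmegaL (r : ℝ) : Matrix (Fin 3) (Fin 3) ℝ :=
  !![0, -r, 0; r, 0, -Real.sqrt (1 - r ^ 2); 0, Real.sqrt (1 - r ^ 2), 0]

noncomputable def OmegaR (r : ℝ) : Matrix (Fin 3) (Fin 3) ℝ :=
  !![0, -r, 0; r, 0, Real.sqrt (1 - r ^ 2); 0, -Real.sqrt (1 - r ^ 2), 0]

noncomputable def OmegaG : Matrix (Fin 3) (Fin 3) ℝ :=
  !![0, -1, 0; 1, 0, 0; 0, 0, 0]

/-- Rotation matrix of a left turn of radius `r` and arc angle `φ`. -/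
noncomputable def RL (r φ : ℝ) : Matrix (Fin 3) (Fin 3) ℝ := NormedSpace.exp (φ • OmegaL r)

/-- Rotation matrix of a right turn of radius `r` and arc angle `φ`. -/
noncomputable def RR (r φ : ℝ) : Matrix (Fin 3) (Fin 3) ℝ := NormedSpace.exp (φ • OmegaR r)

/-- Rotation matrix of a great-circle arc of angle `φ`. -/
noncomputable def RG (φ : ℝ) : Matrix (Fin 3) (Fin 3) ℝ := NormedSpace.exp (φ • OmegaG)

section ExpRot

attribute [local instance] Matrix.linftyOpNormedAddCommGroup Matrix.linftyOpNormedSpace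
  Matrix.linftyOpNormedRing Matrix.linftyOpNormedAlgebra

lemma exp_rot (A : Matrix (Fin 3) (Fin 3) ℝ) (hA : A * A * A = -A) (t : ℝ) :
    NormedSpace.exp (t • A) = 1 + Real.sin t • A + (1 - Real.cos t) • (A * A) := by
  set f : ℝ → Matrix (Fin 3) (Fin 3) ℝ := fun t =>
    NormedSpace.exp (t • (-A)) * (1 + Real.sin t • A + (1 - Real.cos t) • (A * A)) with hf
  have hderiv : ∀ s : ℝ, HasDerivAt f 0 s := by
    intro s
    have h1 : HasDerivAt (fun u : ℝ => NormedSpace.exp (u • (-A)))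
        (NormedSpace.exp (s • (-A)) * (-A)) s := hasDerivAt_exp_smul_const (-A) s
    have h2 : HasDerivAt (fun u : ℝ => 1 + Real.sin u • A + (1 - Real.cos u) • (A * A))
        (Real.cos s • A + Real.sin s • (A * A)) s := by
      have hs : HasDerivAt (fun u : ℝ => Real.sin u • A) (Real.cos s • A) s :=
        (Real.hasDerivAt_sin s).smul_const A
      have hc : HasDerivAt (fun u : ℝ => (1 - Real.cos u) • (A * A)) (Real.sin s • (A * A)) s := by
        have : HasDerivAt (fun u : ℝ => 1 - Real.cos u) (Real.sin s) s := by
          simpa using (Real.hasDerivAt_cos s).const_sub 1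
        exact this.smul_const (A * A)
      have h := ((hasDerivAt_const s (1 : Matrix (Fin 3) (Fin 3) ℝ)).add hs).add hc
      rwa [zero_add] at h
    have := h1.mul h2
    refine this.congr_deriv ?_
    symm
    have key : (-A) * (1 + Real.sin s • A + (1 - Real.cos s) • (A * A))
        + (Real.cos s • A + Real.sin s • (A * A)) = 0 := by
      have h3 : A * (A * A) = -A := by rw [← mul_assoc]; exact hA
      simp only [mul_add, mul_one, neg_mul, mul_smul_comm]
      rw [h3]
      simp only [smul_neg, smul_sub, sub_smul, one_smul]
      abel
    calc (0 : Matrix (Fin 3) (Fin 3) ℝ)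
        = NormedSpace.exp (s • (-A)) * ((-A) * (1 + Real.sin s • A + (1 - Real.cos s) • (A * A))
            + (Real.cos s • A + Real.sin s • (A * A))) := by rw [key, mul_zero]
      _ = _ := by noncomm_ring
  have hconst : ∀ s : ℝ, f s = f 0 := by
    intro s
    apply is_const_of_deriv_eq_zero (fun u => (hderiv u).differentiableAt)
    intro u; exact (hderiv u).deriv
  have h0 : f 0 = 1 := by simp [hf, NormedSpace.exp_zero]
  have hft : NormedSpace.exp (t • (-A)) * (1 + Real.sin t • A + (1 - Real.cos t) • (A * A)) = 1 := by
    have := hconst t; rw [h0] at this; exact this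
  have hinv : NormedSpace.exp (t • A) * NormedSpace.exp (t • (-A)) = 1 := by
    rw [← Matrix.exp_add_of_commute]
    · simp [NormedSpace.exp_zero]
    · simp [smul_neg, Commute.neg_right, Commute.refl]
  calc NormedSpace.exp (t • A)
      = NormedSpace.exp (t • A) * 1 := (mul_one _).symm
    _ = NormedSpace.exp (t • A) * (NormedSpace.exp (t • (-A)) * (1 + Real.sin t • A + (1 - Real.cos t) • (A * A))) := by rw [hft]
    _ = (NormedSpace.exp (t • A) * NormedSpace.exp (t • (-A))) * (1 + Real.sin t • A + (1 - Real.cos t) • (A * A)) := by rw [mul_assoc]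
    _ = 1 + Real.sin t • A + (1 - Real.cos t) • (A * A) := by rw [hinv, one_mul]

end ExpRot

/-- Explicit rotation matrix; `w` is `±√(1-r²)`. -/
def rotM (r w s c : ℝ) : Matrix (Fin 3) (Fin 3) ℝ :=
  !![1-(1-c)*r^2, -(s*r), (1-c)*(r*w);
     s*r, c, -(s*w);
     (1-c)*(r*w), s*w, 1-(1-c)*w^2]

lemma RL_eq (r θ : ℝ) (h : 0 ≤ 1 - r ^ 2) :
    RL r θ = rotM r (Real.sqrt (1 - r ^ 2)) (Real.sin θ) (Real.cos θ) := by
  have hq : Real.sqrt (1 - r ^ 2) ^ 2 = 1 - r ^ 2 := Real.sq_sqrt h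
  set q := Real.sqrt (1 - r ^ 2) with hqd
  have hcube : OmegaL r * OmegaL r * OmegaL r = -(OmegaL r) := by
    ext i j
    fin_cases i <;> fin_cases j <;>
      simp [OmegaL, Matrix.mul_apply, Fin.sum_univ_three, ← hqd] <;>
      first
        | linear_combination r*hq | linear_combination (-r)*hq
        | linear_combination q*hq | linear_combination (-q)*hq
        | linear_combination (2*r)*hq | linear_combination (-2*r)*hq
        | linear_combination (r+q)*hq | linear_combination (r-q)*hq
        | linear_combination (q-r)*hq | linear_combination (Real.cos θ - 1)*hq
        | linear_combination (0:ℝ)*hq | exact Or.inl (by ring) | tauto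
  rw [RL, exp_rot _ hcube]
  ext i j
  fin_cases i <;> fin_cases j <;>
    simp [OmegaL, rotM, Matrix.mul_apply, Fin.sum_univ_three, ← hqd] <;>
    first
      | linear_combination (Real.cos θ - 1) * hq | linear_combination (0:ℝ)*hq
      | exact Or.inl (by ring) | tauto

lemma RR_eq (r θ : ℝ) (h : 0 ≤ 1 - r ^ 2) :
    RR r θ = rotM r (-Real.sqrt (1 - r ^ 2)) (Real.sin θ) (Real.cos θ) := by
  have hq : Real.sqrt (1 - r ^ 2) ^ 2 = 1 - r ^ 2 := Real.sq_sqrt h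
  set q := Real.sqrt (1 - r ^ 2) with hqd
  have hcube : OmegaR r * OmegaR r * OmegaR r = -(OmegaR r) := by
    ext i j
    fin_cases i <;> fin_cases j <;>
      simp [OmegaR, Matrix.mul_apply, Fin.sum_univ_three, ← hqd] <;>
      first
        | linear_combination r*hq | linear_combination (-r)*hq
        | linear_combination q*hq | linear_combination (-q)*hq
        | linear_combination (2*r)*hq | linear_combination (-2*r)*hq
        | linear_combination (r+q)*hq | linear_combination (r-q)*hq
        | linear_combination (q-r)*hq | linear_combination (Real.cos θ - 1)*hq
        | linear_combination (0:ℝ)*hq | exact Or.inl (by ring) | tauto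
  rw [RR, exp_rot _ hcube]
  ext i j
  fin_cases i <;> fin_cases j <;>
    simp [OmegaR, rotM, Matrix.mul_apply, Fin.sum_univ_three, ← hqd] <;>
    first
      | linear_combination (Real.cos θ - 1) * hq | linear_combination (0:ℝ)*hq
      | exact Or.inl (by ring) | tauto

lemma sq_lt_helper (x y : ℝ) (h : x^2 < y^2) (hy : 0 < y) : -y < x ∧ x < y := by
  constructor <;> nlinarith

lemma rotPi_sq (r q : ℝ) (hq : q^2 = 1 - r^2) :
    rotM r q 0 (-1) * rotM r q 0 (-1) = 1 := by
  ext i j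
  fin_cases i <;> fin_cases j <;>
    simp only [rotM, Matrix.mul_apply, Fin.sum_univ_three, Fin.zero_eta, Fin.mk_one,
      Fin.reduceFinMk, Matrix.cons_val', Matrix.cons_val_zero, Matrix.cons_val_one,
      Matrix.head_cons, Matrix.empty_val', Matrix.cons_val_fin_one, Matrix.head_fin_const,
      Matrix.of_apply, Matrix.cons_val_two, Matrix.tail_cons, Matrix.one_apply, Fin.reduceEq,
      reduceIte] <;>
    first
      | linear_combination (4*r^2)*hq | linear_combination (4*q^2)*hq
      | linear_combination (4*r*q)*hq | linear_combination (-4*r*q)*hq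
      | linear_combination (0:ℝ)*hq

set_option maxHeartbeats 2000000 in
lemma key_lin (r q cb sb C D g : ℝ) (hq : q^2 = 1 - r^2) (hs : sb^2 + cb^2 = 1)
    (hg : g = 5 - 10*r^2 + 6*r^4 + 4*(2*r^2-1)*(r^2-1)*cb - 2*r^2*(1-r^2)*(2*cb^2-1))
    (hC : C = 2*(3*r^2-2)*(r^2-1) + 4*(2*r^2-1)*(r^2-1)*cb + (2*r^4-2*r^2+1)*(2*cb^2-1))
    (hD : D = 2*sb*(2*(r^2-1)+(2*r^2-1)*cb)) :
    rotM r q 0 (-1) *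
      !![g-(g+C)*r^2, D*r, (g+C)*(r*q); -(D*r), -C, D*q; (g+C)*(r*q), -(D*q), g-(g+C)*q^2] *
      rotM r (-q) sb (-cb) * rotM r q sb (-cb) =
    rotM r (-q) (-sb) (-cb) * rotM r q (-sb) (-cb) * rotM r (-q) 0 (-1) *
      !![g-(g+C)*r^2, -(D*r), -((g+C)*(r*q)); D*r, -C, D*q; -((g+C)*(r*q)), -(D*q), g-(g+C)*q^2] := by
  ext i j
  fin_cases i <;> fin_cases j <;>
    simp only [rotM, Matrix.mul_apply, Fin.sum_univ_three, Fin.zero_eta, Fin.mk_one,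
      Fin.reduceFinMk, Matrix.cons_val', Matrix.cons_val_zero, Matrix.cons_val_one,
      Matrix.head_cons, Matrix.empty_val', Matrix.cons_val_fin_one, Matrix.head_fin_const,
      Matrix.of_apply, Matrix.cons_val_two, Matrix.tail_cons]
  · linear_combination (0:ℝ) * hg + (0:ℝ) * hC + ((2)*r^2*sb + (-2)*r^2*cb*sb + (4)*r^2*q^2*cb*sb + (-2)*r^2*q^4*sb + (-2)*r^2*q^4*cb*sb + (-4)*r^4*sb + (2)*r^6*sb + (2)*r^6*cb*sb) * hD + ((8)*r^2*sb^2 + (-4)*r^2*cb*sb^2 + (-4)*r^2*cb^2*sb^2 + (8)*r^2*q^2*sb^2 + (12)*r^2*q^2*cb*sb^2 + (4)*r^2*q^2*cb^2*sb^2 + (-16)*r^4*sb^2 + (-12)*r^4*cb*sb^2 + (4)*r^4*cb^2*sb^2 + (-8)*r^4*q^2*sb^2 + (-16)*r^4*q^2*cb*sb^2 + (-8)*r^4*q^2*cb^2*sb^2 + (8)*r^6*sb^2 + (16)*r^6*cb*sb^2 + (8)*r^6*cb^2*sb^2) * hq + (0:ℝ) * hs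
  · linear_combination ((-1)*r*sb + (1)*r*cb*sb + (2)*r*q^2*sb + (2)*r*q^2*cb*sb + (-5)*r*q^4*sb + (-5)*r*q^4*cb*sb + (2)*r*q^6*sb + (2)*r*q^6*cb*sb + (4)*r^3*sb + (-2)*r^3*cb*sb + (2)*r^3*q^2*sb + (6)*r^3*q^2*cb*sb + (-2)*r^3*q^4*sb + (-2)*r^3*q^4*cb*sb + (-5)*r^5*sb + (-1)*r^5*cb*sb + (-2)*r^5*q^2*sb + (-2)*r^5*q^2*cb*sb + (2)*r^7*sb + (2)*r^7*cb*sb) * hg + ((-1)*r*sb + (1)*r*cb*sb + (-3)*r*q^4*sb + (-3)*r*q^4*cb*sb + (2)*r*q^6*sb + (2)*r*q^6*cb*sb + (2)*r^3*sb + (-2)*r^3*q^2*sb + (2)*r^3*q^2*cb*sb + (-2)*r^3*q^4*sb + (-2)*r^3*q^4*cb*sb + (-3)*r^5*sb + (1)*r^5*cb*sb + (-2)*r^5*q^2*sb + (-2)*r^5*q^2*cb*sb + (2)*r^7*sb + (2)*r^7*cb*sb) * hC + ((1)*r + (1)*r*cb^2 + (-2)*r*q^2 + (2)*r*q^2*sb^2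 + (-2)*r*q^2*cb^2 + (1)*r*q^4 + (-4)*r*q^4*sb^2 + (2)*r*q^4*cb + (1)*r*q^4*cb^2 + (-2)*r*q^6 + (-4)*r*q^6*cb + (-2)*r*q^6*cb^2 + (-4)*r^3 + (-2)*r^3*sb^2 + (-2)*r^3*cb + (-2)*r^3*cb^2 + (2)*r^3*q^2 + (-2)*r^3*q^2*cb^2 + (2)*r^3*q^4 + (4)*r^3*q^4*cb + (2)*r^3*q^4*cb^2 + (5)*r^5 + (4)*r^5*sb^2 + (6)*r^5*cb + (1)*r^5*cb^2 + (2)*r^5*q^2 + (4)*r^5*q^2*cb + (2)*r^5*q^2*cb^2 + (-2)*r^7 + (-4)*r^7*cb + (-2)*r^7*cb^2) * hD + ((4)*r*sb + (8)*r*sb^3 + (-2)*r*cb*sb + (4)*r*cb*sb^3 + (6)*r*cb^2*sb + (4)*r*cb^3*sb + (-14)*r*q^2*sb + (16)*r*q^2*sb^3 + (-24)*r*q^2*cb*sb + (8)*r*q^2*cb*sb^3 + (-10)*r*q^2*cb^2*sb + (24)*r*q^4*sb + (52)*r*q^4*cb*sb + (36)*r*q^4*cb^2*sb + (8)*r*q^4*cb^3*sb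 + (-34)*r^3*sb + (-24)*r^3*sb^3 + (-28)*r^3*cb*sb + (-16)*r^3*cb*sb^3 + (-14)*r^3*cb^2*sb + (-12)*r^3*cb^3*sb + (-20)*r^3*q^2*sb + (-16)*r^3*q^2*sb^3 + (-36)*r^3*q^2*cb*sb + (-16)*r^3*q^2*cb*sb^3 + (-20)*r^3*q^2*cb^2*sb + (-4)*r^3*q^2*cb^3*sb + (-40)*r^3*q^4*sb + (-104)*r^3*q^4*cb*sb + (-88)*r^3*q^4*cb^2*sb + (-24)*r^3*q^4*cb^3*sb + (76)*r^5*sb + (16)*r^5*sb^3 + (112)*r^5*cb*sb + (16)*r^5*cb*sb^3 + (32)*r^5*cb^2*sb + (-4)*r^5*cb^3*sb + (64)*r^5*q^2*sb + (160)*r^5*q^2*cb*sb + (128)*r^5*q^2*cb^2*sb + (32)*r^5*q^2*cb^3*sb + (16)*r^5*q^4*sb + (48)*r^5*q^4*cb*sb + (48)*r^5*q^4*cb^2*sb + (16)*r^5*q^4*cb^3*sb + (-56)*r^7*sb + (-120)*r^7*cb*sb + (-72)*r^7*cb^2*sb + (-8)*r^7*cb^3*sb + (-32)*r^7*q^2*sb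 + (-96)*r^7*q^2*cb*sb + (-96)*r^7*q^2*cb^2*sb + (-32)*r^7*q^2*cb^3*sb + (16)*r^9*sb + (48)*r^9*cb*sb + (48)*r^9*cb^2*sb + (16)*r^9*cb^3*sb) * hq + ((8)*r*sb + (4)*r*cb*sb + (-24)*r^3*sb + (-16)*r^3*cb*sb + (16)*r^5*sb + (16)*r^5*cb*sb) * hs
  · linear_combination ((6)*r*q + (-10)*r*q^3 + (6)*r*q^3*sb^2 + (-6)*r*q^3*cb + (10)*r*q^5 + (-4)*r*q^5*sb^2 + (16)*r*q^5*cb + (6)*r*q^5*cb^2 + (-4)*r*q^7 + (-8)*r*q^7*cb + (-4)*r*q^7*cb^2 + (-10)*r^3*q + (-6)*r^3*q*sb^2 + (-6)*r^3*q*cb + (-4)*r^3*q^3 + (-16)*r^3*q^3*cb + (-12)*r^3*q^3*cb^2 + (4)*r^3*q^5 + (8)*r^3*q^5*cb + (4)*r^3*q^5*cb^2 + (10)*r^5*q + (4)*r^5*q*sb^2 + (16)*r^5*q*cb + (6)*r^5*q*cb^2 + (4)*r^5*q^3 + (8)*r^5*q^3*cb + (4)*r^5*q^3*cb^2 + (-4)*r^7*q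 + (-8)*r^7*q*cb + (-4)*r^7*q*cb^2) * hg + ((2)*r*q + (-6)*r*q^3 + (2)*r*q^3*sb^2 + (-2)*r*q^3*cb + (6)*r*q^5 + (-4)*r*q^5*sb^2 + (8)*r*q^5*cb + (2)*r*q^5*cb^2 + (-4)*r*q^7 + (-8)*r*q^7*cb + (-4)*r*q^7*cb^2 + (-6)*r^3*q + (-2)*r^3*q*sb^2 + (-2)*r^3*q*cb + (4)*r^3*q^3 + (-4)*r^3*q^3*cb^2 + (4)*r^3*q^5 + (8)*r^3*q^5*cb + (4)*r^3*q^5*cb^2 + (6)*r^5*q + (4)*r^5*q*sb^2 + (8)*r^5*q*cb + (2)*r^5*q*cb^2 + (4)*r^5*q^3 + (8)*r^5*q^3*cb + (4)*r^5*q^3*cb^2 + (-4)*r^7*q + (-8)*r^7*q*cb + (-4)*r^7*q*cb^2) * hC + ((2)*r*q*sb + (-2)*r*q^3*sb + (-2)*r*q^3*cb*sb + (2)*r*q^5*sb + (2)*r*q^5*cb*sb + (-2)*r^3*q*sb + (-2)*r^3*q*cb*sb + (-2)*r^5*q*sb + (-2)*r^5*q*cb*sb) * hD + ((-32)*r*q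 + (4)*r*q*sb^2 + (-28)*r*q*cb + (-4)*r*q*cb^2 + (-4)*r*q*cb^2*sb^2 + (-4)*r*q*cb^3 + (-4)*r*q*cb^4 + (36)*r*q^3 + (-40)*r*q^3*sb^2 + (72)*r*q^3*cb + (-44)*r*q^3*cb*sb^2 + (40)*r*q^3*cb^2 + (-12)*r*q^3*cb^2*sb^2 + (-4)*r*q^3*cb^4 + (-32)*r*q^5 + (-96)*r*q^5*cb + (-104)*r*q^5*cb^2 + (-48)*r*q^5*cb^3 + (-8)*r*q^5*cb^4 + (84)*r^3*q + (40)*r^3*q*sb^2 + (136)*r^3*q*cb + (44)*r^3*q*cb*sb^2 + (72)*r^3*q*cb^2 + (12)*r^3*q*cb^2*sb^2 + (32)*r^3*q*cb^3 + (12)*r^3*q*cb^4 + (72)*r^3*q^3*sb^2 + (32)*r^3*q^3*cb + (112)*r^3*q^3*cb*sb^2 + (80)*r^3*q^3*cb^2 + (40)*r^3*q^3*cb^2*sb^2 + (64)*r^3*q^3*cb^3 + (16)*r^3*q^3*cb^4 + (64)*r^3*q^5 + (224)*r^3*q^5*cb + (288)*r^3*q^5*cb^2 + (160)*r^3*q^5*cb^3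 + (32)*r^3*q^5*cb^4 + (-128)*r^5*q + (-72)*r^5*q*sb^2 + (-320)*r^5*q*cb + (-112)*r^5*q*cb*sb^2 + (-264)*r^5*q*cb^2 + (-40)*r^5*q*cb^2*sb^2 + (-80)*r^5*q*cb^3 + (-8)*r^5*q*cb^4 + (-96)*r^5*q^3 + (-32)*r^5*q^3*sb^2 + (-352)*r^5*q^3*cb + (-64)*r^5*q^3*cb*sb^2 + (-480)*r^5*q^3*cb^2 + (-32)*r^5*q^3*cb^2*sb^2 + (-288)*r^5*q^3*cb^3 + (-64)*r^5*q^3*cb^4 + (-32)*r^5*q^5 + (-128)*r^5*q^5*cb + (-192)*r^5*q^5*cb^2 + (-128)*r^5*q^5*cb^3 + (-32)*r^5*q^5*cb^4 + (96)*r^7*q + (32)*r^7*q*sb^2 + (320)*r^7*q*cb + (64)*r^7*q*cb*sb^2 + (384)*r^7*q*cb^2 + (32)*r^7*q*cb^2*sb^2 + (192)*r^7*q*cb^3 + (32)*r^7*q*cb^4 + (64)*r^7*q^3 + (256)*r^7*q^3*cb + (384)*r^7*q^3*cb^2 + (256)*r^7*q^3*cb^3 + (64)*r^7*q^3*cb^4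 + (-32)*r^9*q + (-128)*r^9*q*cb + (-192)*r^9*q*cb^2 + (-128)*r^9*q*cb^3 + (-32)*r^9*q*cb^4) * hq + ((-4)*r*q + (-4)*r*q*cb + (-4)*r*q*cb^2 + (16)*r^3*q + (32)*r^3*q*cb + (16)*r^3*q*cb^2 + (-16)*r^5*q + (-32)*r^5*q*cb + (-16)*r^5*q*cb^2) * hs
  · linear_combination ((1)*r*sb + (-1)*r*cb*sb + (-2)*r*q^2*sb + (-2)*r*q^2*cb*sb + (5)*r*q^4*sb + (5)*r*q^4*cb*sb + (-2)*r*q^6*sb + (-2)*r*q^6*cb*sb + (-4)*r^3*sb + (2)*r^3*cb*sb + (-2)*r^3*q^2*sb + (-6)*r^3*q^2*cb*sb + (2)*r^3*q^4*sb + (2)*r^3*q^4*cb*sb + (5)*r^5*sb + (1)*r^5*cb*sb + (2)*r^5*q^2*sb + (2)*r^5*q^2*cb*sb + (-2)*r^7*sb + (-2)*r^7*cb*sb) * hg + ((1)*r*sb + (-1)*r*cb*sb + (3)*r*q^4*sb + (3)*r*q^4*cb*sb + (-2)*r*q^6*sb + (-2)*r*q^6*cb*sb + (-2)*r^3*sb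 + (2)*r^3*q^2*sb + (-2)*r^3*q^2*cb*sb + (2)*r^3*q^4*sb + (2)*r^3*q^4*cb*sb + (3)*r^5*sb + (-1)*r^5*cb*sb + (2)*r^5*q^2*sb + (2)*r^5*q^2*cb*sb + (-2)*r^7*sb + (-2)*r^7*cb*sb) * hC + ((1)*r + (1)*r*cb^2 + (2)*r*q^2*sb^2 + (1)*r*q^4 + (2)*r*q^4*cb + (1)*r*q^4*cb^2 + (-2)*r^3 + (-2)*r^3*sb^2 + (-2)*r^3*cb + (-2)*r^3*q^2 + (-4)*r^3*q^2*cb + (-2)*r^3*q^2*cb^2 + (1)*r^5 + (2)*r^5*cb + (1)*r^5*cb^2) * hD + ((4)*r*sb + (-8)*r*sb^3 + (6)*r*cb*sb + (-4)*r*cb*sb^3 + (2)*r*cb^2*sb + (14)*r*q^2*sb + (24)*r*q^2*cb*sb + (10)*r*q^2*cb^2*sb + (-16)*r*q^4*sb + (-32)*r*q^4*cb*sb + (-20)*r*q^4*cb^2*sb + (-4)*r*q^4*cb^3*sb + (10)*r^3*sb + (8)*r^3*sb^3 + (-4)*r^3*cb*sb + (8)*r^3*cb*sb^3 + (-2)*r^3*cb^2*sb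 + (4)*r^3*cb^3*sb + (4)*r^3*q^2*sb + (-4)*r^3*q^2*cb*sb + (-12)*r^3*q^2*cb^2*sb + (-4)*r^3*q^2*cb^3*sb + (32)*r^3*q^4*sb + (80)*r^3*q^4*cb*sb + (64)*r^3*q^4*cb^2*sb + (16)*r^3*q^4*cb^3*sb + (-52)*r^5*sb + (-60)*r^5*cb*sb + (8)*r^5*cb^3*sb + (-48)*r^5*q^2*sb + (-112)*r^5*q^2*cb*sb + (-80)*r^5*q^2*cb^2*sb + (-16)*r^5*q^2*cb^3*sb + (-16)*r^5*q^4*sb + (-48)*r^5*q^4*cb*sb + (-48)*r^5*q^4*cb^2*sb + (-16)*r^5*q^4*cb^3*sb + (48)*r^7*sb + (96)*r^7*cb*sb + (48)*r^7*cb^2*sb + (32)*r^7*q^2*sb + (96)*r^7*q^2*cb*sb + (96)*r^7*q^2*cb^2*sb + (32)*r^7*q^2*cb^3*sb + (-16)*r^9*sb + (-48)*r^9*cb*sb + (-48)*r^9*cb^2*sb + (-16)*r^9*cb^3*sb) * hq + ((-8)*r*sb + (-4)*r*cb*sb + (24)*r^3*sb + (16)*r^3*cb*sb + (-16)*r^5*sb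 + (-16)*r^5*cb*sb) * hs
  · linear_combination (0:ℝ) * hg + (0:ℝ) * hC + ((-2)*q^2*sb + (-2)*q^2*cb*sb + (4)*q^4*sb + (4)*q^4*cb*sb + (-2)*q^6*sb + (-2)*q^6*cb*sb + (-2)*r^2*sb + (2)*r^2*cb*sb + (-4)*r^2*q^2*cb*sb + (2)*r^2*q^4*sb + (2)*r^2*q^4*cb*sb + (4)*r^4*sb + (2)*r^4*q^2*sb + (2)*r^4*q^2*cb*sb + (-2)*r^6*sb + (-2)*r^6*cb*sb) * hD + ((-8)*q^2*sb^2 + (-12)*q^2*cb*sb^2 + (-4)*q^2*cb^2*sb^2 + (8)*q^4*sb^2 + (12)*q^4*cb*sb^2 + (4)*q^4*cb^2*sb^2 + (-8)*r^2*sb^2 + (4)*r^2*cb*sb^2 + (4)*r^2*cb^2*sb^2 + (-8)*r^2*q^2*sb^2 + (-8)*r^2*q^2*cb*sb^2 + (-8)*r^2*q^4*sb^2 + (-16)*r^2*q^4*cb*sb^2 + (-8)*r^2*q^4*cb^2*sb^2 + (16)*r^4*sb^2 + (12)*r^4*cb*sb^2 + (-4)*r^4*cb^2*sb^2 + (16)*r^4*q^2*sb^2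 + (32)*r^4*q^2*cb*sb^2 + (16)*r^4*q^2*cb^2*sb^2 + (-8)*r^6*sb^2 + (-16)*r^6*cb*sb^2 + (-8)*r^6*cb^2*sb^2) * hq + (0:ℝ) * hs
  · linear_combination ((1)*q*sb + (1)*q*cb*sb + (-4)*q^3*sb + (-4)*q^3*cb*sb + (5)*q^5*sb + (5)*q^5*cb*sb + (-2)*q^7*sb + (-2)*q^7*cb*sb + (-2)*r^2*q*sb + (4)*r^2*q*cb*sb + (-2)*r^2*q^3*sb + (-6)*r^2*q^3*cb*sb + (2)*r^2*q^5*sb + (2)*r^2*q^5*cb*sb + (5)*r^4*q*sb + (1)*r^4*q*cb*sb + (2)*r^4*q^3*sb + (2)*r^4*q^3*cb*sb + (-2)*r^6*q*sb + (-2)*r^6*q*cb*sb) * hg + ((1)*q*sb + (1)*q*cb*sb + (-2)*q^3*sb + (-2)*q^3*cb*sb + (3)*q^5*sb + (3)*q^5*cb*sb + (-2)*q^7*sb + (-2)*q^7*cb*sb + (2)*r^2*q*cb*sb + (2)*r^2*q^3*sb + (-2)*r^2*q^3*cb*sb + (2)*r^2*q^5*sb + (2)*r^2*q^5*cb*sb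 + (3)*r^4*q*sb + (-1)*r^4*q*cb*sb + (2)*r^4*q^3*sb + (2)*r^4*q^3*cb*sb + (-2)*r^6*q*sb + (-2)*r^6*q*cb*sb) * hC + ((-1)*q + (1)*q*cb^2 + (2)*q^3 + (2)*q^3*cb + (-1)*q^5 + (-2)*q^5*cb + (-1)*q^5*cb^2 + (2)*r^2*q^3 + (4)*r^2*q^3*cb + (2)*r^2*q^3*cb^2 + (-1)*r^4*q + (-2)*r^4*q*cb + (-1)*r^4*q*cb^2) * hD + ((-12)*q*sb + (-18)*q*cb*sb + (-6)*q*cb^2*sb + (22)*q^3*sb + (44)*q^3*cb*sb + (26)*q^3*cb^2*sb + (4)*q^3*cb^3*sb + (-16)*q^5*sb + (-32)*q^5*cb*sb + (-20)*q^5*cb^2*sb + (-4)*q^5*cb^3*sb + (18)*r^2*q*sb + (8)*r^2*q*cb*sb + (-2)*r^2*q*cb^2*sb + (-4)*r^2*q^3*sb + (-28)*r^2*q^3*cb*sb + (-36)*r^2*q^3*cb^2*sb + (-12)*r^2*q^3*cb^3*sb + (32)*r^2*q^5*sb + (80)*r^2*q^5*cb*sb + (64)*r^2*q^5*cb^2*sb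 + (16)*r^2*q^5*cb^3*sb + (-44)*r^4*q*sb + (-36)*r^4*q*cb*sb + (24)*r^4*q*cb^2*sb + (16)*r^4*q*cb^3*sb + (-48)*r^4*q^3*sb + (-112)*r^4*q^3*cb*sb + (-80)*r^4*q^3*cb^2*sb + (-16)*r^4*q^3*cb^3*sb + (-16)*r^4*q^5*sb + (-48)*r^4*q^5*cb*sb + (-48)*r^4*q^5*cb^2*sb + (-16)*r^4*q^5*cb^3*sb + (48)*r^6*q*sb + (96)*r^6*q*cb*sb + (48)*r^6*q*cb^2*sb + (32)*r^6*q^3*sb + (96)*r^6*q^3*cb*sb + (96)*r^6*q^3*cb^2*sb + (32)*r^6*q^3*cb^3*sb + (-16)*r^8*q*sb + (-48)*r^8*q*cb*sb + (-48)*r^8*q*cb^2*sb + (-16)*r^8*q*cb^3*sb) * hq + (0:ℝ) * hs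
  · linear_combination ((6)*r*q + (-10)*r*q^3 + (6)*r*q^3*sb^2 + (-6)*r*q^3*cb + (10)*r*q^5 + (-4)*r*q^5*sb^2 + (16)*r*q^5*cb + (6)*r*q^5*cb^2 + (-4)*r*q^7 + (-8)*r*q^7*cb + (-4)*r*q^7*cb^2 + (-10)*r^3*q + (-6)*r^3*q*sb^2 + (-6)*r^3*q*cb + (-4)*r^3*q^3 + (-16)*r^3*q^3*cb + (-12)*r^3*q^3*cb^2 + (4)*r^3*q^5 + (8)*r^3*q^5*cb + (4)*r^3*q^5*cb^2 + (10)*r^5*q + (4)*r^5*q*sb^2 + (16)*r^5*q*cb + (6)*r^5*q*cb^2 + (4)*r^5*q^3 + (8)*r^5*q^3*cb + (4)*r^5*q^3*cb^2 + (-4)*r^7*q + (-8)*r^7*q*cb + (-4)*r^7*q*cb^2) * hg + ((2)*r*q + (-6)*r*q^3 + (2)*r*q^3*sb^2 + (-2)*r*q^3*cb + (6)*r*q^5 + (-4)*r*q^5*sb^2 + (8)*r*q^5*cb + (2)*r*q^5*cb^2 + (-4)*r*q^7 + (-8)*r*q^7*cb + (-4)*r*q^7*cb^2 + (-6)*r^3*q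 + (-2)*r^3*q*sb^2 + (-2)*r^3*q*cb + (4)*r^3*q^3 + (-4)*r^3*q^3*cb^2 + (4)*r^3*q^5 + (8)*r^3*q^5*cb + (4)*r^3*q^5*cb^2 + (6)*r^5*q + (4)*r^5*q*sb^2 + (8)*r^5*q*cb + (2)*r^5*q*cb^2 + (4)*r^5*q^3 + (8)*r^5*q^3*cb + (4)*r^5*q^3*cb^2 + (-4)*r^7*q + (-8)*r^7*q*cb + (-4)*r^7*q*cb^2) * hC + ((-2)*r*q*sb + (2)*r*q^3*sb + (-2)*r*q^3*cb*sb + (2)*r*q^5*sb + (2)*r*q^5*cb*sb + (2)*r^3*q*sb + (-2)*r^3*q*cb*sb + (-2)*r^5*q*sb + (-2)*r^5*q*cb*sb) * hD + ((-32)*r*q + (-12)*r*q*sb^2 + (-28)*r*q*cb + (-8)*r*q*cb*sb^2 + (-4)*r*q*cb^2 + (-4)*r*q*cb^2*sb^2 + (-4)*r*q*cb^3 + (-4)*r*q*cb^4 + (36)*r*q^3 + (-40)*r*q^3*sb^2 + (72)*r*q^3*cb + (-44)*r*q^3*cb*sb^2 + (40)*r*q^3*cb^2 + (-12)*r*q^3*cb^2*sb^2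 + (-4)*r*q^3*cb^4 + (-32)*r*q^5 + (-96)*r*q^5*cb + (-104)*r*q^5*cb^2 + (-48)*r*q^5*cb^3 + (-8)*r*q^5*cb^4 + (84)*r^3*q + (56)*r^3*q*sb^2 + (136)*r^3*q*cb + (60)*r^3*q*cb*sb^2 + (72)*r^3*q*cb^2 + (12)*r^3*q*cb^2*sb^2 + (32)*r^3*q*cb^3 + (12)*r^3*q*cb^4 + (72)*r^3*q^3*sb^2 + (32)*r^3*q^3*cb + (112)*r^3*q^3*cb*sb^2 + (80)*r^3*q^3*cb^2 + (40)*r^3*q^3*cb^2*sb^2 + (64)*r^3*q^3*cb^3 + (16)*r^3*q^3*cb^4 + (64)*r^3*q^5 + (224)*r^3*q^5*cb + (288)*r^3*q^5*cb^2 + (160)*r^3*q^5*cb^3 + (32)*r^3*q^5*cb^4 + (-128)*r^5*q + (-72)*r^5*q*sb^2 + (-320)*r^5*q*cb + (-112)*r^5*q*cb*sb^2 + (-264)*r^5*q*cb^2 + (-40)*r^5*q*cb^2*sb^2 + (-80)*r^5*q*cb^3 + (-8)*r^5*q*cb^4 + (-96)*r^5*q^3 + (-32)*r^5*q^3*sb^2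 + (-352)*r^5*q^3*cb + (-64)*r^5*q^3*cb*sb^2 + (-480)*r^5*q^3*cb^2 + (-32)*r^5*q^3*cb^2*sb^2 + (-288)*r^5*q^3*cb^3 + (-64)*r^5*q^3*cb^4 + (-32)*r^5*q^5 + (-128)*r^5*q^5*cb + (-192)*r^5*q^5*cb^2 + (-128)*r^5*q^5*cb^3 + (-32)*r^5*q^5*cb^4 + (96)*r^7*q + (32)*r^7*q*sb^2 + (320)*r^7*q*cb + (64)*r^7*q*cb*sb^2 + (384)*r^7*q*cb^2 + (32)*r^7*q*cb^2*sb^2 + (192)*r^7*q*cb^3 + (32)*r^7*q*cb^4 + (64)*r^7*q^3 + (256)*r^7*q^3*cb + (384)*r^7*q^3*cb^2 + (256)*r^7*q^3*cb^3 + (64)*r^7*q^3*cb^4 + (-32)*r^9*q + (-128)*r^9*q*cb + (-192)*r^9*q*cb^2 + (-128)*r^9*q*cb^3 + (-32)*r^9*q*cb^4) * hq + ((-4)*r*q + (-4)*r*q*cb + (-4)*r*q*cb^2 + (16)*r^3*q + (32)*r^3*q*cb + (16)*r^3*q*cb^2 + (-16)*r^5*q + (-32)*r^5*q*cb + (-16)*r^5*q*cb^2)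 * hs
  · linear_combination ((1)*q*sb + (1)*q*cb*sb + (-4)*q^3*sb + (-4)*q^3*cb*sb + (5)*q^5*sb + (5)*q^5*cb*sb + (-2)*q^7*sb + (-2)*q^7*cb*sb + (-2)*r^2*q*sb + (4)*r^2*q*cb*sb + (-2)*r^2*q^3*sb + (-6)*r^2*q^3*cb*sb + (2)*r^2*q^5*sb + (2)*r^2*q^5*cb*sb + (5)*r^4*q*sb + (1)*r^4*q*cb*sb + (2)*r^4*q^3*sb + (2)*r^4*q^3*cb*sb + (-2)*r^6*q*sb + (-2)*r^6*q*cb*sb) * hg + ((1)*q*sb + (1)*q*cb*sb + (-2)*q^3*sb + (-2)*q^3*cb*sb + (3)*q^5*sb + (3)*q^5*cb*sb + (-2)*q^7*sb + (-2)*q^7*cb*sb + (2)*r^2*q*cb*sb + (2)*r^2*q^3*sb + (-2)*r^2*q^3*cb*sb + (2)*r^2*q^5*sb + (2)*r^2*q^5*cb*sb + (3)*r^4*q*sb + (-1)*r^4*q*cb*sb + (2)*r^4*q^3*sb + (2)*r^4*q^3*cb*sb + (-2)*r^6*q*sb + (-2)*r^6*q*cb*sb) * hC + ((1)*q + (-1)*q*cb^2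 + (-4)*q^3 + (-2)*q^3*cb + (2)*q^3*cb^2 + (5)*q^5 + (6)*q^5*cb + (1)*q^5*cb^2 + (-2)*q^7 + (-4)*q^7*cb + (-2)*q^7*cb^2 + (-2)*r^2*q + (2)*r^2*q*cb^2 + (2)*r^2*q^3 + (-2)*r^2*q^3*cb^2 + (2)*r^2*q^5 + (4)*r^2*q^5*cb + (2)*r^2*q^5*cb^2 + (1)*r^4*q + (2)*r^4*q*cb + (1)*r^4*q*cb^2 + (2)*r^4*q^3 + (4)*r^4*q^3*cb + (2)*r^4*q^3*cb^2 + (-2)*r^6*q + (-4)*r^6*q*cb + (-2)*r^6*q*cb^2) * hD + ((-4)*q*sb + (-14)*q*cb*sb + (-14)*q*cb^2*sb + (-4)*q*cb^3*sb + (6)*q^3*sb + (20)*q^3*cb*sb + (18)*q^3*cb^2*sb + (4)*q^3*cb^3*sb + (-8)*q^5*sb + (-12)*q^5*cb*sb + (-4)*q^5*cb^2*sb + (10)*r^2*q*sb + (6)*r^2*q*cb^2*sb + (8)*r^2*q*cb^3*sb + (-4)*r^2*q^3*sb + (-36)*r^2*q^3*cb*sb + (-52)*r^2*q^3*cb^2*sb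 + (-20)*r^2*q^3*cb^3*sb + (24)*r^2*q^5*sb + (56)*r^2*q^5*cb*sb + (40)*r^2*q^5*cb^2*sb + (8)*r^2*q^5*cb^3*sb + (-36)*r^4*q*sb + (-16)*r^4*q*cb*sb + (40)*r^4*q*cb^2*sb + (20)*r^4*q*cb^3*sb + (-32)*r^4*q^3*sb + (-64)*r^4*q^3*cb*sb + (-32)*r^4*q^3*cb^2*sb + (-16)*r^4*q^5*sb + (-48)*r^4*q^5*cb*sb + (-48)*r^4*q^5*cb^2*sb + (-16)*r^4*q^5*cb^3*sb + (40)*r^6*q*sb + (72)*r^6*q*cb*sb + (24)*r^6*q*cb^2*sb + (-8)*r^6*q*cb^3*sb + (32)*r^6*q^3*sb + (96)*r^6*q^3*cb*sb + (96)*r^6*q^3*cb^2*sb + (32)*r^6*q^3*cb^3*sb + (-16)*r^8*q*sb + (-48)*r^8*q*cb*sb + (-48)*r^8*q*cb^2*sb + (-16)*r^8*q*cb^3*sb) * hq + (0:ℝ) * hs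
  · linear_combination (0:ℝ) * hg + (0:ℝ) * hC + ((-2)*q^2*sb + (-2)*q^2*cb*sb + (4)*q^4*sb + (4)*q^4*cb*sb + (-2)*q^6*sb + (-2)*q^6*cb*sb + (2)*r^4*q^2*sb + (2)*r^4*q^2*cb*sb) * hD + ((-8)*q^2*sb^2 + (-12)*q^2*cb*sb^2 + (-4)*q^2*cb^2*sb^2 + (8)*q^4*sb^2 + (12)*q^4*cb*sb^2 + (4)*q^4*cb^2*sb^2 + (4)*r^2*q^2*cb*sb^2 + (4)*r^2*q^2*cb^2*sb^2 + (-8)*r^2*q^4*sb^2 + (-16)*r^2*q^4*cb*sb^2 + (-8)*r^2*q^4*cb^2*sb^2 + (8)*r^4*q^2*sb^2 + (16)*r^4*q^2*cb*sb^2 + (8)*r^4*q^2*cb^2*sb^2) * hq + (0:ℝ) * hs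

set_option maxHeartbeats 2000000 in
lemma GR_orth (r q C D g : ℝ) (hq : q^2 = 1 - r^2) (hCD : C^2 + D^2 = g^2) :
    !![g-(g+C)*r^2, -(D*r), -((g+C)*(r*q)); D*r, -C, D*q; -((g+C)*(r*q)), -(D*q), g-(g+C)*q^2] *
    !![g-(g+C)*r^2, D*r, -((g+C)*(r*q)); -(D*r), -C, -(D*q); -((g+C)*(r*q)), D*q, g-(g+C)*q^2] =
    (g^2) • (1 : Matrix (Fin 3) (Fin 3) ℝ) := by
  ext i j
  fin_cases i <;> fin_cases j <;>
    simp only [rotM, Matrix.mul_apply, Fin.sum_univ_three, Fin.zero_eta, Fin.mk_one,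
      Fin.reduceFinMk, Matrix.cons_val', Matrix.cons_val_zero, Matrix.cons_val_one,
      Matrix.head_cons, Matrix.empty_val', Matrix.cons_val_fin_one, Matrix.head_fin_const,
      Matrix.of_apply, Matrix.cons_val_two, Matrix.tail_cons, Matrix.smul_apply,
      Matrix.one_apply, smul_eq_mul, Fin.reduceEq, reduceIte] <;>
    norm_num
  · linear_combination ((2)*r^2 + (-1)*r^2*q^2 + (-1)*r^4) * hCD + ((2)*r^2*C*g + (2)*r^2*C^2 + (1)*r^2*D^2) * hq
  · linear_combination (0:ℝ) * hCD + ((-1)*r*D*g + (-1)*r*D*C) * hq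
  · linear_combination ((2)*r*q + (-1)*r*q^3 + (-1)*r^3*q) * hCD + ((2)*r*q*C*g + (2)*r*q*C^2 + (1)*r*q*D^2) * hq
  · linear_combination (0:ℝ) * hCD + ((-1)*r*D*g + (-1)*r*D*C) * hq
  · linear_combination ((1)) * hCD + ((1)*D^2) * hq
  · linear_combination (0:ℝ) * hCD + ((-1)*q*D*g + (-1)*q*D*C) * hq
  · linear_combination ((2)*r*q + (-1)*r*q^3 + (-1)*r^3*q) * hCD + ((2)*r*q*C*g + (2)*r*q*C^2 + (1)*r*q*D^2) * hq
  · linear_combination (0:ℝ) * hCD + ((-1)*q*D*g + (-1)*q*D*C) * hq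
  · linear_combination ((2)*q^2 + (-1)*q^4 + (-1)*r^2*q^2) * hCD + ((2)*q^2*C*g + (2)*q^2*C^2 + (1)*q^2*D^2) * hq

set_option maxHeartbeats 4000000 in
theorem stmt_1 (r β : ℝ) (hr : 1 / Real.sqrt 2 < r) (hr' : r ≤ Real.sqrt 3 / 2)
    (hβ : β ∈ Set.Ioo (0 : ℝ) Real.pi)
    (g C D : ℝ)
    (hg : g = 5 - 10 * r ^ 2 + 6 * r ^ 4 + 4 * (2 * r ^ 2 - 1) * (r ^ 2 - 1) * Real.cos β -
      2 * r ^ 2 * (1 - r ^ 2) * Real.cos (2 * β))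
    (hC : C = 2 * (3 * r ^ 2 - 2) * (r ^ 2 - 1) +
      4 * (2 * r ^ 2 - 1) * (r ^ 2 - 1) * Real.cos β +
      (2 * r ^ 4 - 2 * r ^ 2 + 1) * Real.cos (2 * β))
    (hD : D = 2 * Real.sin β * (2 * (r ^ 2 - 1) + (2 * r ^ 2 - 1) * Real.cos β)) :
    0 < g ∧
    ∃ φ ∈ Set.Ioo (0 : ℝ) Real.pi,
      Real.sin φ = -D / g ∧ Real.cos φ = -C / g ∧
      RL r φ * RR r (Real.pi - β) * RL r (Real.pi - β) * RR r φ =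
        RL r Real.pi * RR r (Real.pi + β) * RL r (Real.pi + β) * RR r Real.pi ∧
      r * (2 * φ + 2 * (Real.pi - β)) < r * (2 * Real.pi + 2 * (Real.pi + β)) := by
  obtain ⟨hβ0, hβπ⟩ := hβ
  have hs2 : (0:ℝ) < Real.sqrt 2 := Real.sqrt_pos.mpr (by norm_num)
  have hr0 : 0 < r := lt_trans (by positivity) hr
  have hr2 : 1/2 < r^2 := by
    have h1 : (1 / Real.sqrt 2)^2 = 1/2 := by
      rw [div_pow, one_pow, Real.sq_sqrt (by norm_num : (0:ℝ) ≤ 2)]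
    have h2 : (1 / Real.sqrt 2)^2 < r^2 := by
      apply pow_lt_pow_left₀ hr (by positivity) (by norm_num)
    linarith
  have hr34 : r^2 ≤ 3/4 := by
    have h1 : (Real.sqrt 3 / 2)^2 = 3/4 := by
      rw [div_pow, Real.sq_sqrt (by norm_num : (0:ℝ) ≤ 3)]; norm_num
    have h2 : r^2 ≤ (Real.sqrt 3 / 2)^2 := pow_le_pow_left₀ hr0.le hr' 2
    linarith
  have hq0 : (0:ℝ) ≤ 1 - r^2 := by nlinarith
  set q := Real.sqrt (1 - r^2) with hqdef
  have hq : q^2 = 1 - r^2 := Real.sq_sqrt hq0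
  have hsb : 0 < Real.sin β := Real.sin_pos_of_pos_of_lt_pi hβ0 hβπ
  have hcb1 : Real.cos β < 1 := by
    have h := Real.strictAntiOn_cos (Set.mem_Icc.mpr ⟨le_refl 0, Real.pi_pos.le⟩)
      (Set.mem_Icc.mpr ⟨hβ0.le, hβπ.le⟩) hβ0
    rwa [Real.cos_zero] at h
  have hcb2 : -1 < Real.cos β := by
    have h := Real.strictAntiOn_cos (Set.mem_Icc.mpr ⟨hβ0.le, hβπ.le⟩)
      (Set.mem_Icc.mpr ⟨Real.pi_pos.le, le_refl Real.pi⟩) hβπ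
    rwa [Real.cos_pi] at h
  rw [Real.cos_two_mul] at hg hC
  have hgpos : 0 < g := by
    have hgid : g = (1 - Real.cos β)/2 + (1 + Real.cos β)*(3-4*r^2)^2/2 +
        4*r^2*(1-r^2)*((1-Real.cos β)*(1+Real.cos β)) := by rw [hg]; ring
    have t1 : 0 ≤ (1 + Real.cos β)*(3-4*r^2)^2 := mul_nonneg (by linarith) (sq_nonneg _)
    have t2 : 0 ≤ 4*r^2*(1-r^2)*((1-Real.cos β)*(1+Real.cos β)) := by
      apply mul_nonneg
      · apply mul_nonneg (by positivity) hq0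
      · apply mul_nonneg (by linarith) (by linarith)
    linarith
  have hg0 : g ≠ 0 := ne_of_gt hgpos
  have hD0 : D < 0 := by
    rw [hD]
    apply mul_neg_of_pos_of_neg (by linarith)
    have hp : 0 < (2*r^2-1)*(1-Real.cos β) := mul_pos (by linarith) (by linarith)
    nlinarith
  have hCD : C^2 + D^2 = g^2 := by
    rw [hg, hC, hD]
    linear_combination (16 + 16*Real.cos β + 4*Real.cos β^2 - 32*r^2 - 48*r^2*Real.cos β
      - 16*r^2*Real.cos β^2 + 16*r^4 + 32*r^4*Real.cos β + 16*r^4*Real.cos β^2) *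
      (Real.sin_sq_add_cos_sq β)
  have hD2 : 0 < D^2 := by nlinarith
  have hC2 : C^2 < g^2 := by linarith [hCD, hD2]
  obtain ⟨hCgt, hClt⟩ := sq_lt_helper C g hC2 hgpos
  set φ := Real.arccos (-C/g) with hφdef
  have hxle : -C/g ≤ 1 := by rw [div_le_one hgpos]; linarith
  have hxge : -1 ≤ -C/g := by rw [le_div_iff₀ hgpos]; linarith
  have hcosφ : Real.cos φ = -C/g := Real.cos_arccos hxge hxle
  have hsinφ : Real.sin φ = -D/g := by
    rw [hφdef, Real.sin_arccos]
    have h12 : 1 - (-C/g)^2 = (-D/g)^2 := by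
      field_simp
      linear_combination -hCD
    rw [h12]
    exact Real.sqrt_sq (le_of_lt (div_pos (neg_pos.mpr hD0) hgpos))
  have hsinφpos : 0 < Real.sin φ := by rw [hsinφ]; exact div_pos (neg_pos.mpr hD0) hgpos
  have hφpos : 0 < φ := Real.arccos_pos.mpr (by rw [div_lt_one hgpos]; linarith)
  have hφlt : φ < Real.pi := by
    rcases lt_or_eq_of_le (Real.arccos_le_pi (-C/g)) with h | h
    · exact h
    · exfalso; rw [hφdef] at hsinφpos; rw [h, Real.sin_pi] at hsinφpos; linarith
  have hgs : g * Real.sin φ = -D := by rw [hsinφ]; field_simp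
  have hgc : g * Real.cos φ = -C := by rw [hcosφ]; field_simp
  refine ⟨hgpos, φ, ⟨hφpos, hφlt⟩, hsinφ, hcosφ, ?_, ?_⟩
  · -- the matrix identity
    have e1 : g • RL r φ =
        !![g-(g+C)*r^2, D*r, (g+C)*(r*q); -(D*r), -C, D*q; (g+C)*(r*q), -(D*q), g-(g+C)*q^2] := by
      rw [RL_eq r φ hq0, ← hqdef]
      ext i j
      fin_cases i <;> fin_cases j <;>
        simp only [rotM, Matrix.smul_apply, Fin.zero_eta, Fin.mk_one, Fin.reduceFinMk,
          Matrix.cons_val', Matrix.cons_val_zero, Matrix.cons_val_one, Matrix.head_cons,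
          Matrix.empty_val', Matrix.cons_val_fin_one, Matrix.head_fin_const, Matrix.of_apply,
          Matrix.cons_val_two, Matrix.tail_cons, smul_eq_mul] <;>
        first
          | linear_combination hgc | linear_combination (r^2)*hgc
          | linear_combination (q^2)*hgc | linear_combination (r*q)*hgc
          | linear_combination (-(r*q))*hgc | linear_combination r*hgs
          | linear_combination (-r)*hgs | linear_combination q*hgs
          | linear_combination (-q)*hgs
    have e2 : g • RR r φ =
        !![g-(g+C)*r^2, D*r, -((g+C)*(r*q)); -(D*r), -C, -(D*q); -((g+C)*(r*q)), D*q, g-(g+C)*q^2] := by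
      rw [RR_eq r φ hq0, ← hqdef]
      ext i j
      fin_cases i <;> fin_cases j <;>
        simp only [rotM, Matrix.smul_apply, Fin.zero_eta, Fin.mk_one, Fin.reduceFinMk,
          Matrix.cons_val', Matrix.cons_val_zero, Matrix.cons_val_one, Matrix.head_cons,
          Matrix.empty_val', Matrix.cons_val_fin_one, Matrix.head_fin_const, Matrix.of_apply,
          Matrix.cons_val_two, Matrix.tail_cons, smul_eq_mul, mul_neg, neg_neg] <;>
        first
          | linear_combination hgc | linear_combination (r^2)*hgc
          | linear_combination (q^2)*hgc | linear_combination (r*q)*hgc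
          | linear_combination (-(r*q))*hgc | linear_combination r*hgs
          | linear_combination (-r)*hgs | linear_combination q*hgs
          | linear_combination (-q)*hgs
    have hPmat : RL r Real.pi = rotM r q 0 (-1) := by
      rw [RL_eq r Real.pi hq0, ← hqdef, Real.sin_pi, Real.cos_pi]
    have hSmat : RR r Real.pi = rotM r (-q) 0 (-1) := by
      rw [RR_eq r Real.pi hq0, ← hqdef, Real.sin_pi, Real.cos_pi]
    have hBmat : RR r (Real.pi - β) = rotM r (-q) (Real.sin β) (-Real.cos β) := by
      rw [RR_eq _ _ hq0, ← hqdef, Real.sin_pi_sub, Real.cos_pi_sub]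
    have hCmat : RL r (Real.pi - β) = rotM r q (Real.sin β) (-Real.cos β) := by
      rw [RL_eq _ _ hq0, ← hqdef, Real.sin_pi_sub, Real.cos_pi_sub]
    have hQmat : RR r (Real.pi + β) = rotM r (-q) (-Real.sin β) (-Real.cos β) := by
      rw [RR_eq _ _ hq0, ← hqdef, add_comm, Real.sin_add_pi, Real.cos_add_pi]
    have hRmat : RL r (Real.pi + β) = rotM r q (-Real.sin β) (-Real.cos β) := by
      rw [RL_eq _ _ hq0, ← hqdef, add_comm, Real.sin_add_pi, Real.cos_add_pi]
    have hPP := rotPi_sq r q hq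
    have hkey := key_lin r q (Real.cos β) (Real.sin β) C D g hq (Real.sin_sq_add_cos_sq β) hg hC hD
    have horth := GR_orth r q C D g hq hCD
    have hkey' : rotM r q 0 (-1) *
        (!![g-(g+C)*r^2, D*r, (g+C)*(r*q); -(D*r), -C, D*q; (g+C)*(r*q), -(D*q), g-(g+C)*q^2] *
          (rotM r (-q) (Real.sin β) (-Real.cos β) * rotM r q (Real.sin β) (-Real.cos β))) =
        rotM r (-q) (-Real.sin β) (-Real.cos β) * (rotM r q (-Real.sin β) (-Real.cos β) *
          (rotM r (-q) 0 (-1) *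
          !![g-(g+C)*r^2, -(D*r), -((g+C)*(r*q)); D*r, -C, D*q; -((g+C)*(r*q)), -(D*q), g-(g+C)*q^2])) := by
      simpa only [mul_assoc] using hkey
    have hcancel : ∀ M : Matrix (Fin 3) (Fin 3) ℝ,
        rotM r q 0 (-1) * (rotM r q 0 (-1) * M) = M := fun M => by
      rw [← mul_assoc, hPP, one_mul]
    have main2 : !![g-(g+C)*r^2, D*r, (g+C)*(r*q); -(D*r), -C, D*q; (g+C)*(r*q), -(D*q), g-(g+C)*q^2] *
        (rotM r (-q) (Real.sin β) (-Real.cos β) * (rotM r q (Real.sin β) (-Real.cos β) *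
          !![g-(g+C)*r^2, D*r, -((g+C)*(r*q)); -(D*r), -C, -(D*q); -((g+C)*(r*q)), D*q, g-(g+C)*q^2])) =
        g^2 • (rotM r q 0 (-1) * (rotM r (-q) (-Real.sin β) (-Real.cos β) *
          (rotM r q (-Real.sin β) (-Real.cos β) * rotM r (-q) 0 (-1)))) := by
      calc !![g-(g+C)*r^2, D*r, (g+C)*(r*q); -(D*r), -C, D*q; (g+C)*(r*q), -(D*q), g-(g+C)*q^2] *
            (rotM r (-q) (Real.sin β) (-Real.cos β) * (rotM r q (Real.sin β) (-Real.cos β) *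
              !![g-(g+C)*r^2, D*r, -((g+C)*(r*q)); -(D*r), -C, -(D*q); -((g+C)*(r*q)), D*q, g-(g+C)*q^2]))
          = rotM r q 0 (-1) * (rotM r q 0 (-1) *
            (!![g-(g+C)*r^2, D*r, (g+C)*(r*q); -(D*r), -C, D*q; (g+C)*(r*q), -(D*q), g-(g+C)*q^2] *
            (rotM r (-q) (Real.sin β) (-Real.cos β) * (rotM r q (Real.sin β) (-Real.cos β) *
              !![g-(g+C)*r^2, D*r, -((g+C)*(r*q)); -(D*r), -C, -(D*q); -((g+C)*(r*q)), D*q, g-(g+C)*q^2])))) :=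
            (hcancel _).symm
        _ = rotM r q 0 (-1) *
            ((rotM r q 0 (-1) *
            (!![g-(g+C)*r^2, D*r, (g+C)*(r*q); -(D*r), -C, D*q; (g+C)*(r*q), -(D*q), g-(g+C)*q^2] *
              (rotM r (-q) (Real.sin β) (-Real.cos β) * rotM r q (Real.sin β) (-Real.cos β)))) *
              !![g-(g+C)*r^2, D*r, -((g+C)*(r*q)); -(D*r), -C, -(D*q); -((g+C)*(r*q)), D*q, g-(g+C)*q^2]) := by
            simp only [mul_assoc]
        _ = rotM r q 0 (-1) *
            ((rotM r (-q) (-Real.sin β) (-Real.cos β) * (rotM r q (-Real.sin β) (-Real.cos β) *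
              (rotM r (-q) 0 (-1) *
              !![g-(g+C)*r^2, -(D*r), -((g+C)*(r*q)); D*r, -C, D*q; -((g+C)*(r*q)), -(D*q), g-(g+C)*q^2]))) *
              !![g-(g+C)*r^2, D*r, -((g+C)*(r*q)); -(D*r), -C, -(D*q); -((g+C)*(r*q)), D*q, g-(g+C)*q^2]) := by
            rw [hkey']
        _ = rotM r q 0 (-1) * (rotM r (-q) (-Real.sin β) (-Real.cos β) *
            (rotM r q (-Real.sin β) (-Real.cos β) * (rotM r (-q) 0 (-1) *
            (!![g-(g+C)*r^2, -(D*r), -((g+C)*(r*q)); D*r, -C, D*q; -((g+C)*(r*q)), -(D*q), g-(g+C)*q^2] *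
             !![g-(g+C)*r^2, D*r, -((g+C)*(r*q)); -(D*r), -C, -(D*q); -((g+C)*(r*q)), D*q, g-(g+C)*q^2])))) := by
            simp only [mul_assoc]
        _ = rotM r q 0 (-1) * (rotM r (-q) (-Real.sin β) (-Real.cos β) *
            (rotM r q (-Real.sin β) (-Real.cos β) * (rotM r (-q) 0 (-1) *
              ((g^2) • (1 : Matrix (Fin 3) (Fin 3) ℝ))))) := by rw [horth]
        _ = g^2 • (rotM r q 0 (-1) * (rotM r (-q) (-Real.sin β) (-Real.cos β) *
            (rotM r q (-Real.sin β) (-Real.cos β) * rotM r (-q) 0 (-1)))) := by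
            simp only [Matrix.mul_smul, mul_one]
    apply smul_right_injective (Matrix (Fin 3) (Fin 3) ℝ) (pow_ne_zero 2 hg0)
    show g^2 • (RL r φ * RR r (Real.pi - β) * RL r (Real.pi - β) * RR r φ) =
      g^2 • (RL r Real.pi * RR r (Real.pi + β) * RL r (Real.pi + β) * RR r Real.pi)
    rw [hPmat, hSmat, hQmat, hRmat, hBmat, hCmat]
    calc g^2 • (RL r φ * rotM r (-q) (Real.sin β) (-Real.cos β) *
          rotM r q (Real.sin β) (-Real.cos β) * RR r φ)
        = (g • RL r φ) * (rotM r (-q) (Real.sin β) (-Real.cos β) *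
            (rotM r q (Real.sin β) (-Real.cos β) * (g • RR r φ))) := by
          simp only [Matrix.smul_mul, Matrix.mul_smul, smul_smul, mul_assoc, pow_two]
      _ = !![g-(g+C)*r^2, D*r, (g+C)*(r*q); -(D*r), -C, D*q; (g+C)*(r*q), -(D*q), g-(g+C)*q^2] *
          (rotM r (-q) (Real.sin β) (-Real.cos β) * (rotM r q (Real.sin β) (-Real.cos β) *
            !![g-(g+C)*r^2, D*r, -((g+C)*(r*q)); -(D*r), -C, -(D*q); -((g+C)*(r*q)), D*q, g-(g+C)*q^2])) := by
          rw [e1, e2]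
      _ = g^2 • (rotM r q 0 (-1) * (rotM r (-q) (-Real.sin β) (-Real.cos β) *
            (rotM r q (-Real.sin β) (-Real.cos β) * rotM r (-q) 0 (-1)))) := main2
      _ = g^2 • (rotM r q 0 (-1) * rotM r (-q) (-Real.sin β) (-Real.cos β) *
            rotM r q (-Real.sin β) (-Real.cos β) * rotM r (-q) 0 (-1)) := by
          simp only [mul_assoc]
  · nlinarith [hr0, hφlt, hβ0, Real.pi_pos]
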